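/- Let σ_1, …, σ_N be density matrices on ℂ^d, let {E_x}_{x=1}^N be a POVM with N outcomes on ℂ^d, and let α > 1 be a real number. Then the average success probability satisfies (1/N) · Σ_{x=1}^N tr(E_x σ_x) ≤ 2^{((α−1)/α) · (−log₂ N + χ_α)}, where χ_α = χ_α({1/N, σ_x}) is the α-Holevo quantity of the uniform ensemble of the states σ_1, …, σ_N. -/

import Mathlib

open Matrix ComplexOrder

/-- Matrix power via functional calculus on eigenvalues, with the convention `0 ^ β = 0`
(matrices that are not Hermitian are sent to `0`). -/
noncomputable def mpow {d : ℕ} (A : Matrix (Fin d) (Fin d) ℂ) (β : ℝ) :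
    Matrix (Fin d) (Fin d) ℂ :=
  if hA : A.IsHermitian then
    (hA.eigenvectorUnitary : Matrix (Fin d) (Fin d) ℂ) *
      Matrix.diagonal (fun i =>
        ((if hA.eigenvalues i = 0 then (0 : ℝ) else hA.eigenvalues i ^ β : ℝ) : ℂ)) *
      star (hA.eigenvectorUnitary : Matrix (Fin d) (Fin d) ℂ)
  else 0

/-- The `α`-Holevo quantity of an ensemble `{p x, ρ x}`:
`χ_α = (α/(α−1)) · log₂ tr((∑ x, p x • ρ x ^ α)^(1/α))`. -/
noncomputable def chiAlpha {d m : ℕ} (α : ℝ) (p : Fin m → ℝ)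
    (ρ : Fin m → Matrix (Fin d) (Fin d) ℂ) : ℝ :=
  (α / (α - 1)) * Real.logb 2 ((mpow (∑ x, (p x : ℂ) • mpow (ρ x) α) (1 / α)).trace).re


section LHAux

open MeasureTheory Set

variable {d : ℕ} {A B : Matrix (Fin d) (Fin d) ℂ}

lemma contOn (f : ℝ → ℝ) (A : Matrix (Fin d) (Fin d) ℂ) :
    ContinuousOn f (spectrum ℝ A) :=
  Set.Finite.continuousOn A.finite_real_spectrum f

lemma contOn' (f : ℝ → ℝ) (g : ℝ → ℝ) (A : Matrix (Fin d) (Fin d) ℂ) :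
    ContinuousOn f (g '' spectrum ℝ A) :=
  Set.Finite.continuousOn (Set.Finite.image g A.finite_real_spectrum) f

lemma spec_nonneg (hA : A.PosSemidef) : ∀ t ∈ spectrum ℝ A, 0 ≤ t := by
  rw [hA.1.spectrum_real_eq_range_eigenvalues]
  rintro t ⟨i, rfl⟩
  exact hA.eigenvalues_nonneg i

lemma isSelfAdjoint_of_hermitian (hA : A.IsHermitian) : IsSelfAdjoint A := hA

lemma exists_rep (hA : A.IsHermitian) (x : Fin d → ℂ) :
    ∃ lam nn : Fin d → ℝ, (∀ i, lam i ∈ spectrum ℝ A) ∧ (∀ i, 0 ≤ nn i) ∧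
      ∀ f : ℝ → ℝ, star x ⬝ᵥ (cfc f A *ᵥ x) = ((∑ i, f (lam i) * nn i : ℝ) : ℂ) := by
  set U : Matrix (Fin d) (Fin d) ℂ := (hA.eigenvectorUnitary : Matrix (Fin d) (Fin d) ℂ) with hU
  set y : Fin d → ℂ := star U *ᵥ x with hy
  refine ⟨hA.eigenvalues, fun i => Complex.normSq (y i),
    fun i => hA.eigenvalues_mem_spectrum_real i, fun i => Complex.normSq_nonneg _, fun f => ?_⟩
  rw [hA.cfc_eq f]
  unfold Matrix.IsHermitian.cfc
  rw [Unitary.conjStarAlgAut_apply]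
  rw [← Matrix.mulVec_mulVec, ← Matrix.mulVec_mulVec, Matrix.dotProduct_mulVec (star x)]
  have h1 : star x ᵥ* U = star y := by
    rw [hy, Matrix.star_mulVec, Matrix.star_eq_conjTranspose, Matrix.conjTranspose_conjTranspose]
  rw [h1]
  have h2 : ∀ i, (Matrix.diagonal (RCLike.ofReal ∘ f ∘ hA.eigenvalues) *ᵥ y) i
      = (f (hA.eigenvalues i) : ℂ) * y i := by
    intro i; rw [Matrix.mulVec_diagonal]; rfl
  have h3 : star y ⬝ᵥ (Matrix.diagonal (RCLike.ofReal ∘ f ∘ hA.eigenvalues) *ᵥ y)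
      = ∑ i, (f (hA.eigenvalues i) : ℂ) * Complex.normSq (y i) := by
    unfold dotProduct
    refine Finset.sum_congr rfl fun i _ => ?_
    rw [h2 i]
    have : (starRingEnd ℂ) (y i) * y i = (Complex.normSq (y i) : ℂ) := by
      rw [mul_comm, Complex.mul_conj]
    simp only [Pi.star_apply, Complex.star_def]
    rw [mul_comm ((starRingEnd ℂ) (y i)) _, mul_assoc, Complex.mul_conj]
  rw [h3]
  push_cast
  rfl

lemma exists_rep_tr (hA : A.IsHermitian) :
    ∃ lam : Fin d → ℝ, (∀ i, lam i ∈ spectrum ℝ A) ∧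
      ∀ f : ℝ → ℝ, (cfc f A).trace = ((∑ i, f (lam i) : ℝ) : ℂ) := by
  refine ⟨hA.eigenvalues, fun i => hA.eigenvalues_mem_spectrum_real i, fun f => ?_⟩
  rw [hA.cfc_eq f]
  unfold Matrix.IsHermitian.cfc
  rw [Unitary.conjStarAlgAut_apply]
  rw [Matrix.trace_mul_cycle]
  rw [Unitary.star_mul_self_of_mem (SetLike.coe_mem _), one_mul]
  rw [Matrix.trace_diagonal]
  push_cast
  rfl

lemma cfc_posSemidef (hA : A.IsHermitian) {f : ℝ → ℝ} (hf : ∀ t ∈ spectrum ℝ A, 0 ≤ f t) :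
    (cfc f A).PosSemidef := by
  rw [hA.cfc_eq f]
  unfold Matrix.IsHermitian.cfc
  have hd : (Matrix.diagonal (RCLike.ofReal ∘ f ∘ hA.eigenvalues) :
      Matrix (Fin d) (Fin d) ℂ).PosSemidef := by
    rw [Matrix.posSemidef_diagonal_iff]
    intro i
    exact Complex.zero_le_real.2 (hf _ (hA.eigenvalues_mem_spectrum_real i))
  have h2 := hd.mul_mul_conjTranspose_same (hA.eigenvectorUnitary : Matrix (Fin d) (Fin d) ℂ)
  rwa [← Matrix.star_eq_conjTranspose] at h2

lemma psd_smul {M : Matrix (Fin d) (Fin d) ℂ} (hM : M.PosSemidef) {c : ℝ} (hc : 0 ≤ c) :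
    (c • M).PosSemidef := by
  refine Matrix.PosSemidef.of_dotProduct_mulVec_nonneg ?_ ?_
  · have := hM.1
    unfold Matrix.IsHermitian at this ⊢
    rw [Matrix.conjTranspose_smul, this]
    congr 1
  · intro x
    rw [Matrix.smul_mulVec, dotProduct_smul]
    have h := hM.dotProduct_mulVec_nonneg x
    have : (c : ℂ) * (star x ⬝ᵥ M *ᵥ x) = c • (star x ⬝ᵥ M *ᵥ x) := (Complex.real_smul).symm
    rw [← this]
    exact mul_nonneg (Complex.zero_le_real.2 hc) h

lemma psd_smul_one {s : ℝ} (hs : 0 ≤ s) :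
    ((s : ℝ) • (1 : Matrix (Fin d) (Fin d) ℂ)).PosSemidef :=
  psd_smul Matrix.PosSemidef.one hs

section Integral

variable {p : ℝ}

noncomputable def lhC (p : ℝ) : ℝ := ∫ s in Ioi (0:ℝ), s ^ (p-1) / (1+s)

lemma lhK_contOn : ContinuousOn (fun s : ℝ => s ^ (p-1) / (1+s)) (Ioi 0) := by
  apply ContinuousOn.div
  · exact fun s hs =>
      (Real.continuousAt_rpow_const s (p-1) (Or.inl (ne_of_gt hs))).continuousWithinAt
  · fun_prop
  · intro s hs
    have : (0:ℝ) < s := hs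
    positivity

lemma lhK_integrable (hp0 : 0 < p) (hp1 : p < 1) :
    IntegrableOn (fun s : ℝ => s ^ (p-1) / (1+s)) (Ioi (0:ℝ)) := by
  have h1 : IntegrableOn (fun s : ℝ => s ^ (p-1) / (1+s)) (Ioc (0:ℝ) 1) := by
    have hi : IntegrableOn (fun s : ℝ => s ^ (p-1)) (Ioc (0:ℝ) 1) := by
      have h := intervalIntegral.intervalIntegrable_rpow' (a := 0) (b := 1) (r := p-1)
        (by linarith)
      rwa [intervalIntegrable_iff_integrableOn_Ioc_of_le (by norm_num)] at h
    refine hi.mono' ((lhK_contOn.mono Ioc_subset_Ioi_self).aestronglyMeasurable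
      measurableSet_Ioc) ?_
    rw [ae_restrict_iff' measurableSet_Ioc]
    refine ae_of_all _ fun s hs => ?_
    have hs0 : (0:ℝ) < s := hs.1
    have hnum : (0:ℝ) ≤ s ^ (p-1) := Real.rpow_nonneg hs0.le _
    have hden : (1:ℝ) ≤ 1 + s := by linarith
    rw [Real.norm_eq_abs, abs_of_nonneg (by positivity)]
    calc s ^ (p-1) / (1+s) ≤ s ^ (p-1) / 1 := by
          apply div_le_div_of_nonneg_left hnum one_pos hden
      _ = s ^ (p-1) := by ring
  have h2 : IntegrableOn (fun s : ℝ => s ^ (p-1) / (1+s)) (Ioi (1:ℝ)) := by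
    have hi : IntegrableOn (fun s : ℝ => s ^ (p-2)) (Ioi (1:ℝ)) :=
      integrableOn_Ioi_rpow_of_lt (by linarith) one_pos
    refine hi.mono' ((lhK_contOn.mono (Ioi_subset_Ioi zero_le_one)).aestronglyMeasurable
      measurableSet_Ioi) ?_
    rw [ae_restrict_iff' measurableSet_Ioi]
    refine ae_of_all _ fun s hs => ?_
    have hs1 : (1:ℝ) < s := hs
    have hs0 : (0:ℝ) < s := lt_trans one_pos hs1
    rw [Real.norm_eq_abs, abs_of_nonneg (by positivity)]
    have key : s ^ (p-1) / (1+s) ≤ s ^ (p-1) / s :=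
      div_le_div_of_nonneg_left (Real.rpow_nonneg hs0.le _) hs0 (by linarith)
    refine key.trans_eq ?_
    rw [eq_comm, eq_div_iff (ne_of_gt hs0), ← Real.rpow_add_one (ne_of_gt hs0)]
    ring_nf
  have := h1.union h2
  rwa [Ioc_union_Ioi_eq_Ioi zero_le_one] at this

lemma lhK_pos {s : ℝ} (hs : 0 < s) : 0 < s ^ (p-1) / (1+s) := by positivity

lemma lhC_pos (hp0 : 0 < p) (hp1 : p < 1) : 0 < lhC p := by
  rw [lhC, setIntegral_pos_iff_support_of_nonneg_ae]
  · have hsub : Ioi (0:ℝ) ⊆ Function.support (fun s : ℝ => s ^ (p-1) / (1+s)) ∩ Ioi 0 :=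
      fun s hs => ⟨ne_of_gt (lhK_pos hs), hs⟩
    calc (0:ENNReal) < volume (Ioi (0:ℝ)) := by rw [Real.volume_Ioi]; exact ENNReal.zero_lt_top
      _ ≤ _ := measure_mono hsub
  · refine (ae_restrict_iff' measurableSet_Ioi).2 (ae_of_all _ fun s hs => (lhK_pos hs).le)
  · exact lhK_integrable hp0 hp1

lemma int_lam (hp0 : 0 < p) (hp1 : p < 1) {lam : ℝ} (hlam : 0 ≤ lam) :
    IntegrableOn (fun s : ℝ => s ^ (p-1) * (lam / (lam + s))) (Ioi (0:ℝ)) := by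
  rcases eq_or_lt_of_le hlam with h0 | h0
  · simp only [← h0, zero_div, mul_zero]
    exact integrableOn_zero
  · have hg : IntegrableOn (fun s : ℝ => (lam+1) * (s ^ (p-1) / (1+s))) (Ioi (0:ℝ)) :=
      (lhK_integrable hp0 hp1).const_mul _
    refine hg.mono' ?_ ?_
    · refine ContinuousOn.aestronglyMeasurable ?_ measurableSet_Ioi
      apply ContinuousOn.mul
      · exact fun s hs =>
          (Real.continuousAt_rpow_const s (p-1) (Or.inl (ne_of_gt hs))).continuousWithinAt
      · apply ContinuousOn.div continuousOn_const (by fun_prop)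
        intro s hs
        have : (0:ℝ) < s := hs
        positivity
    · rw [ae_restrict_iff' measurableSet_Ioi]
      refine ae_of_all _ fun s hs => ?_
      have hs0 : (0:ℝ) < s := hs
      rw [Real.norm_eq_abs, abs_of_nonneg (by positivity)]
      have key : lam / (lam + s) ≤ (lam + 1) / (1 + s) := by
        rw [div_le_div_iff₀ (by linarith) (by linarith)]
        nlinarith
      calc s ^ (p-1) * (lam / (lam + s)) ≤ s ^ (p-1) * ((lam+1) / (1+s)) := by
            apply mul_le_mul_of_nonneg_left key (Real.rpow_nonneg hs0.le _)
        _ = (lam+1) * (s ^ (p-1) / (1+s)) := by ring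

lemma int_lam_eq (hp0 : 0 < p) (hp1 : p < 1) {lam : ℝ} (hlam : 0 < lam) :
    ∫ s in Ioi (0:ℝ), s ^ (p-1) * (lam / (lam + s)) = lam ^ p * lhC p := by
  have key := MeasureTheory.integral_comp_mul_left_Ioi
    (fun s => s ^ (p-1) * (lam / (lam + s))) 0 hlam
  simp only [mul_zero] at key
  have h1 : EqOn (fun u : ℝ => (lam*u) ^ (p-1) * (lam / (lam + lam*u)))
      (fun u : ℝ => lam ^ (p-1) * (u ^ (p-1) / (1+u))) (Ioi 0) := by
    intro u hu
    have hu0 : (0:ℝ) < u := hu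
    simp only
    rw [Real.mul_rpow hlam.le hu0.le]
    have : lam / (lam + lam * u) = 1 / (1 + u) := by
      rw [div_eq_div_iff (by nlinarith) (by nlinarith)]
      ring
    rw [this]
    ring
  rw [setIntegral_congr_fun measurableSet_Ioi h1] at key
  rw [MeasureTheory.integral_const_mul] at key
  have hC : lam ^ (p-1) * lhC p = lam⁻¹ * ∫ s in Ioi (0:ℝ), s ^ (p-1) * (lam / (lam + s)) := by
    rw [smul_eq_mul] at key
    rw [← key, lhC]
  have : ∫ s in Ioi (0:ℝ), s ^ (p-1) * (lam / (lam + s)) = lam * (lam ^ (p-1) * lhC p) := by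
    rw [hC]
    rw [← mul_assoc, mul_inv_cancel₀ (ne_of_gt hlam), one_mul]
  rw [this, ← mul_assoc]
  congr 1
  nth_rewrite 1 [← Real.rpow_one lam]
  rw [← Real.rpow_add hlam]
  norm_num


end Integral

lemma re_nonneg_of_nonneg {z : ℂ} (h : 0 ≤ z) : 0 ≤ z.re := (Complex.le_def.1 h).1

lemma herm_selfadj (hA : A.IsHermitian) : IsSelfAdjoint A := hA

lemma selfadj_herm (hA : IsSelfAdjoint A) : A.IsHermitian := hA

lemma cs_dot (a b : Fin d → ℂ) :
    (star a ⬝ᵥ b).re ≤ Real.sqrt (star a ⬝ᵥ a).re * Real.sqrt (star b ⬝ᵥ b).re := by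
  have hinner : ∀ u v : Fin d → ℂ,
      (inner ℂ ((WithLp.equiv 2 (Fin d → ℂ)).symm u) ((WithLp.equiv 2 (Fin d → ℂ)).symm v) : ℂ)
        = star u ⬝ᵥ v := by
    intro u v
    rw [PiLp.inner_apply]
    simp [dotProduct, RCLike.inner_apply]
    exact Finset.sum_congr rfl fun i _ => mul_comm _ _
  set a' := (WithLp.equiv 2 (Fin d → ℂ)).symm a
  set b' := (WithLp.equiv 2 (Fin d → ℂ)).symm b
  have h1 : (star a ⬝ᵥ a).re = ‖a'‖ ^ 2 := by
    rw [← hinner a a]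
    simpa [a'] using inner_self_eq_norm_sq (𝕜 := ℂ) a'
  have h2 : (star b ⬝ᵥ b).re = ‖b'‖ ^ 2 := by
    rw [← hinner b b]
    simpa [b'] using inner_self_eq_norm_sq (𝕜 := ℂ) b'
  have h3 : (star a ⬝ᵥ b).re ≤ ‖a'‖ * ‖b'‖ := by
    rw [← hinner a b]
    calc (Complex.re (inner ℂ a' b')) ≤ ‖(inner ℂ a' b' : ℂ)‖ := Complex.re_le_norm _
      _ ≤ ‖a'‖ * ‖b'‖ := norm_inner_le_norm a' b'
  rw [h1, h2, Real.sqrt_sq (norm_nonneg _), Real.sqrt_sq (norm_nonneg _)]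
  exact h3

lemma herm_shift {M : Matrix (Fin d) (Fin d) ℂ} (hM : M.IsHermitian) (v w : Fin d → ℂ) :
    star (M *ᵥ v) ⬝ᵥ w = star v ⬝ᵥ (M *ᵥ w) := by
  rw [Matrix.star_mulVec, ← Matrix.dotProduct_mulVec, hM.eq]

lemma cfc_shift_eq (hA : A.PosSemidef) (s : ℝ) :
    cfc (fun t : ℝ => t + s) A = A + s • 1 := by
  have h : cfc (fun t : ℝ => t + s) A = cfc (id : ℝ → ℝ) A + cfc (fun _ : ℝ => s) A := by
    rw [← cfc_add A (id : ℝ → ℝ) (fun _ : ℝ => s) (contOn _ _) (contOn _ _)]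
    rfl
  rw [h, cfc_id ℝ A (herm_selfadj hA.1), cfc_const s A (herm_selfadj hA.1),
    Algebra.algebraMap_eq_smul_one]

lemma cfc_inv_shift_mul (hA : A.PosSemidef) {s : ℝ} (hs : 0 < s) :
    (A + s • 1) * cfc (fun t : ℝ => (t + s)⁻¹) A = 1 := by
  rw [← cfc_shift_eq hA s, ← cfc_mul _ _ A (contOn _ _) (contOn _ _)]
  have h : cfc (fun t : ℝ => (t + s) * (t + s)⁻¹) A = cfc (fun _ : ℝ => (1:ℝ)) A :=
    cfc_congr fun t ht => by
      have h0 : 0 ≤ t := spec_nonneg hA t ht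
      exact mul_inv_cancel₀ (by positivity)
  rw [h, cfc_const 1 A (herm_selfadj hA.1), _root_.map_one]

lemma cfc_sqrt_shift_mul_self (hA : A.PosSemidef) {s : ℝ} (hs : 0 < s) :
    cfc (fun t : ℝ => Real.sqrt (t + s)) A * cfc (fun t : ℝ => Real.sqrt (t + s)) A
      = A + s • 1 := by
  rw [← cfc_shift_eq hA s, ← cfc_mul _ _ A (contOn _ _) (contOn _ _)]
  refine cfc_congr fun t ht => ?_
  have h0 : 0 ≤ t := spec_nonneg hA t ht
  exact Real.mul_self_sqrt (by positivity)

lemma cfc_sqrt_shift_mul_inv (hA : A.PosSemidef) {s : ℝ} (hs : 0 < s) :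
    cfc (fun t : ℝ => Real.sqrt (t + s)) A * cfc (fun t : ℝ => (Real.sqrt (t + s))⁻¹) A = 1 := by
  rw [← cfc_mul _ _ A (contOn _ _) (contOn _ _)]
  have h : cfc (fun t : ℝ => Real.sqrt (t + s) * (Real.sqrt (t + s))⁻¹) A
      = cfc (fun _ : ℝ => (1:ℝ)) A :=
    cfc_congr fun t ht => by
      have h0 : 0 ≤ t := spec_nonneg hA t ht
      have hpos : 0 < Real.sqrt (t + s) := Real.sqrt_pos.2 (by positivity)
      exact mul_inv_cancel₀ (ne_of_gt hpos)
  rw [h, cfc_const 1 A (herm_selfadj hA.1), _root_.map_one]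

lemma cfc_sqrt_inv_mul_self (hA : A.PosSemidef) {s : ℝ} (hs : 0 < s) :
    cfc (fun t : ℝ => (Real.sqrt (t + s))⁻¹) A * cfc (fun t : ℝ => (Real.sqrt (t + s))⁻¹) A
      = cfc (fun t : ℝ => (t + s)⁻¹) A := by
  rw [← cfc_mul _ _ A (contOn _ _) (contOn _ _)]
  refine cfc_congr fun t ht => ?_
  have h0 : 0 ≤ t := spec_nonneg hA t ht
  rw [← mul_inv]
  rw [Real.mul_self_sqrt (by positivity)]

lemma resolvent_mono (hA : A.PosSemidef) (hB : B.PosSemidef) (hBA : (B - A).PosSemidef)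
    {s : ℝ} (hs : 0 < s) (x : Fin d → ℂ) :
    (star x ⬝ᵥ (cfc (fun t : ℝ => (t + s)⁻¹) B *ᵥ x)).re ≤
      (star x ⬝ᵥ (cfc (fun t : ℝ => (t + s)⁻¹) A *ᵥ x)).re := by
  set A' := cfc (fun t : ℝ => (t + s)⁻¹) A with hA'def
  set B' := cfc (fun t : ℝ => (t + s)⁻¹) B with hB'def
  set P : Matrix (Fin d) (Fin d) ℂ := A + s • 1 with hPdef
  set Q : Matrix (Fin d) (Fin d) ℂ := B + s • 1 with hQdef
  set ph := cfc (fun t : ℝ => Real.sqrt (t + s)) A with hphdef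
  set pnh := cfc (fun t : ℝ => (Real.sqrt (t + s))⁻¹) A with hpnhdef
  have hPpsd : P.PosSemidef := hA.add (psd_smul_one hs.le)
  have hQpsd : Q.PosSemidef := hB.add (psd_smul_one hs.le)
  have hA'psd : A'.PosSemidef := cfc_posSemidef hA.1 fun t ht => by
    have := spec_nonneg hA t ht; positivity
  have hB'psd : B'.PosSemidef := cfc_posSemidef hB.1 fun t ht => by
    have := spec_nonneg hB t ht; positivity
  have hphherm : ph.IsHermitian := selfadj_herm (cfc_predicate _ A)
  have hpnhherm : pnh.IsHermitian := selfadj_herm (cfc_predicate _ A)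
  set u := B' *ᵥ x with hudef
  have hQu : Q *ᵥ u = x := by
    rw [hudef, Matrix.mulVec_mulVec, cfc_inv_shift_mul hB hs, Matrix.one_mulVec]
  set tC := star u ⬝ᵥ (Q *ᵥ u) with htCdef
  have e1 : star x ⬝ᵥ (B' *ᵥ x) = tC := by
    conv_lhs => rw [← hudef, ← hQu]
    rw [herm_shift hQpsd.1]
  set a := ph *ᵥ u with hadef
  set b := pnh *ᵥ x with hbdef
  have e2 : star a ⬝ᵥ b = tC := by
    rw [hadef, hbdef, herm_shift hphherm, Matrix.mulVec_mulVec,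
      cfc_sqrt_shift_mul_inv hA hs, Matrix.one_mulVec, ← hQu]
  have e3 : star a ⬝ᵥ a = star u ⬝ᵥ (P *ᵥ u) := by
    rw [hadef, herm_shift hphherm, Matrix.mulVec_mulVec, cfc_sqrt_shift_mul_self hA hs]
  have e4 : star b ⬝ᵥ b = star x ⬝ᵥ (A' *ᵥ x) := by
    rw [hbdef, herm_shift hpnhherm, Matrix.mulVec_mulVec, cfc_sqrt_inv_mul_self hA hs]
  have hQP : Q = P + (B - A) := by rw [hPdef, hQdef]; abel
  have hsplit : tC = star u ⬝ᵥ (P *ᵥ u) + star u ⬝ᵥ ((B - A) *ᵥ u) := by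
    rw [htCdef, hQP, Matrix.add_mulVec, dotProduct_add]
  have hPQ : (star u ⬝ᵥ (P *ᵥ u)).re ≤ tC.re := by
    rw [hsplit, Complex.add_re]
    have := re_nonneg_of_nonneg (hBA.dotProduct_mulVec_nonneg u)
    linarith
  have ht0 : 0 ≤ tC.re := re_nonneg_of_nonneg (hQpsd.dotProduct_mulVec_nonneg u)
  have hq0 : 0 ≤ (star x ⬝ᵥ (A' *ᵥ x)).re := re_nonneg_of_nonneg (hA'psd.dotProduct_mulVec_nonneg x)
  have hCS : tC.re ≤ Real.sqrt (star u ⬝ᵥ (P *ᵥ u)).re * Real.sqrt (star x ⬝ᵥ (A' *ᵥ x)).re := by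
    calc tC.re = (star a ⬝ᵥ b).re := by rw [e2]
      _ ≤ Real.sqrt (star a ⬝ᵥ a).re * Real.sqrt (star b ⬝ᵥ b).re := cs_dot a b
      _ = _ := by rw [e3, e4]
  have hCS2 : tC.re ≤ Real.sqrt tC.re * Real.sqrt (star x ⬝ᵥ (A' *ᵥ x)).re :=
    hCS.trans (mul_le_mul_of_nonneg_right (Real.sqrt_le_sqrt hPQ) (Real.sqrt_nonneg _))
  rw [e1]
  rcases eq_or_lt_of_le ht0 with h0 | h0
  · rw [← h0]; exact hq0
  · have hsq : Real.sqrt tC.re ≤ Real.sqrt (star x ⬝ᵥ (A' *ᵥ x)).re := by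
      have := hCS2
      nth_rewrite 1 [← Real.mul_self_sqrt ht0] at this
      exact le_of_mul_le_mul_left this (Real.sqrt_pos.2 h0)
    calc tC.re = Real.sqrt tC.re ^ 2 := (Real.sq_sqrt ht0).symm
      _ ≤ Real.sqrt (star x ⬝ᵥ (A' *ᵥ x)).re ^ 2 := by
          apply pow_le_pow_left₀ (Real.sqrt_nonneg _) hsq
      _ = _ := Real.sq_sqrt hq0

lemma cfc_res_eq (hA : A.PosSemidef) {s : ℝ} (hs : 0 < s) :
    cfc (fun t : ℝ => t / (t + s)) A = 1 - s • cfc (fun t : ℝ => (t + s)⁻¹) A := by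
  have h1 : cfc (fun t : ℝ => t / (t + s)) A
      = cfc (fun t : ℝ => (fun _ : ℝ => (1:ℝ)) t - (fun t : ℝ => s * (t + s)⁻¹) t) A := by
    refine cfc_congr fun t ht => ?_
    have h0 : 0 ≤ t := spec_nonneg hA t ht
    have hts : t + s ≠ 0 := by positivity
    field_simp
    ring
  rw [h1, cfc_sub _ _ A (contOn _ _) (contOn _ _)]
  have h2 : cfc (fun _ : ℝ => (1:ℝ)) A = 1 := by
    rw [cfc_const 1 A (herm_selfadj hA.1), _root_.map_one]
  have h3 : cfc (fun t : ℝ => s * (t + s)⁻¹) A = s • cfc (fun t : ℝ => (t + s)⁻¹) A := by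
    have := cfc_smul (R := ℝ) s (fun t : ℝ => (t + s)⁻¹) A (contOn _ _)
    simpa [smul_eq_mul] using this
  rw [h2, h3]

lemma res_qf_mono (hA : A.PosSemidef) (hB : B.PosSemidef) (hBA : (B - A).PosSemidef)
    {s : ℝ} (hs : 0 < s) (x : Fin d → ℂ) :
    (star x ⬝ᵥ (cfc (fun t : ℝ => t / (t + s)) A *ᵥ x)).re ≤
      (star x ⬝ᵥ (cfc (fun t : ℝ => t / (t + s)) B *ᵥ x)).re := by
  have expand : ∀ (C : Matrix (Fin d) (Fin d) ℂ), C.PosSemidef →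
      (star x ⬝ᵥ (cfc (fun t : ℝ => t / (t + s)) C *ᵥ x)).re
        = (star x ⬝ᵥ x).re - s * (star x ⬝ᵥ (cfc (fun t : ℝ => (t + s)⁻¹) C *ᵥ x)).re := by
    intro C hC
    rw [cfc_res_eq hC hs, Matrix.sub_mulVec, Matrix.one_mulVec, Matrix.smul_mulVec,
      dotProduct_sub, dotProduct_smul, Complex.sub_re, Complex.smul_re]
    rfl
  rw [expand A hA, expand B hB]
  have := resolvent_mono hA hB hBA hs x
  nlinarith
lemma lh_psd (hA : A.PosSemidef) (hB : B.PosSemidef) (hBA : (B - A).PosSemidef)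
    {p : ℝ} (hp0 : 0 < p) (hp1 : p < 1) :
    (cfc (fun t : ℝ => t ^ p) B - cfc (fun t : ℝ => t ^ p) A).PosSemidef := by
  refine Matrix.PosSemidef.of_dotProduct_mulVec_nonneg ?_ ?_
  · exact ((cfc_predicate (fun t : ℝ => t ^ p) B).sub (cfc_predicate (fun t : ℝ => t ^ p) A))
  · intro x
    obtain ⟨lamA, nnA, hlamA, hnnA, hrepA⟩ := exists_rep hA.1 x
    obtain ⟨lamB, nnB, hlamB, hnnB, hrepB⟩ := exists_rep hB.1 x
    have hlamA0 : ∀ i, 0 ≤ lamA i := fun i => spec_nonneg hA _ (hlamA i)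
    have hlamB0 : ∀ i, 0 ≤ lamB i := fun i => spec_nonneg hB _ (hlamB i)
    rw [Matrix.sub_mulVec, dotProduct_sub, hrepA (fun t : ℝ => t ^ p),
      hrepB (fun t : ℝ => t ^ p), ← Complex.ofReal_sub]
    rw [Complex.zero_le_real, sub_nonneg]
    -- real inequality:  ∑ lamA^p nnA ≤ ∑ lamB^p nnB
    set GA : ℝ → ℝ := fun s => ∑ i, nnA i * (s ^ (p-1) * (lamA i / (lamA i + s))) with hGA
    set GB : ℝ → ℝ := fun s => ∑ i, nnB i * (s ^ (p-1) * (lamB i / (lamB i + s))) with hGB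
    have hintA : IntegrableOn GA (Ioi (0:ℝ)) :=
      integrable_finset_sum _ fun i _ => (int_lam hp0 hp1 (hlamA0 i)).const_mul _
    have hintB : IntegrableOn GB (Ioi (0:ℝ)) :=
      integrable_finset_sum _ fun i _ => (int_lam hp0 hp1 (hlamB0 i)).const_mul _
    have hvalA : ∫ s in Ioi (0:ℝ), GA s = (∑ i, (lamA i) ^ p * nnA i) * lhC p := by
      rw [hGA, MeasureTheory.integral_finset_sum _
        (fun i _ => (int_lam hp0 hp1 (hlamA0 i)).const_mul _), Finset.sum_mul]
      refine Finset.sum_congr rfl fun i _ => ?_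
      rw [MeasureTheory.integral_const_mul]
      rcases eq_or_lt_of_le (hlamA0 i) with h0 | h0
      · simp [← h0, Real.zero_rpow (ne_of_gt hp0)]
      · rw [int_lam_eq hp0 hp1 h0]; ring
    have hvalB : ∫ s in Ioi (0:ℝ), GB s = (∑ i, (lamB i) ^ p * nnB i) * lhC p := by
      rw [hGB, MeasureTheory.integral_finset_sum _
        (fun i _ => (int_lam hp0 hp1 (hlamB0 i)).const_mul _), Finset.sum_mul]
      refine Finset.sum_congr rfl fun i _ => ?_
      rw [MeasureTheory.integral_const_mul]
      rcases eq_or_lt_of_le (hlamB0 i) with h0 | h0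
      · simp [← h0, Real.zero_rpow (ne_of_gt hp0)]
      · rw [int_lam_eq hp0 hp1 h0]; ring
    have hmono : ∀ s ∈ Ioi (0:ℝ), GA s ≤ GB s := by
      intro s hs
      have hs0 : (0:ℝ) < s := hs
      have hA' : (star x ⬝ᵥ (cfc (fun t : ℝ => t / (t + s)) A *ᵥ x)).re
          = ∑ i, (lamA i / (lamA i + s)) * nnA i := by
        rw [hrepA (fun t : ℝ => t / (t + s)), Complex.ofReal_re]
      have hB' : (star x ⬝ᵥ (cfc (fun t : ℝ => t / (t + s)) B *ᵥ x)).re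
          = ∑ i, (lamB i / (lamB i + s)) * nnB i := by
        rw [hrepB (fun t : ℝ => t / (t + s)), Complex.ofReal_re]
      have key := res_qf_mono hA hB hBA hs0 x
      rw [hA', hB'] at key
      have eGA : GA s = s ^ (p-1) * ∑ i, (lamA i / (lamA i + s)) * nnA i := by
        rw [hGA, Finset.mul_sum]
        exact Finset.sum_congr rfl fun i _ => by ring
      have eGB : GB s = s ^ (p-1) * ∑ i, (lamB i / (lamB i + s)) * nnB i := by
        rw [hGB, Finset.mul_sum]
        exact Finset.sum_congr rfl fun i _ => by ring
      rw [eGA, eGB]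
      exact mul_le_mul_of_nonneg_left key (Real.rpow_nonneg hs0.le _)
    have hle : ∫ s in Ioi (0:ℝ), GA s ≤ ∫ s in Ioi (0:ℝ), GB s :=
      MeasureTheory.setIntegral_mono_on hintA hintB measurableSet_Ioi hmono
    rw [hvalA, hvalB] at hle
    exact le_of_mul_le_mul_right hle (lhC_pos hp0 hp1)

lemma mpow_eq_cfc (hA : A.IsHermitian) (β : ℝ) :
    mpow A β = cfc (fun t : ℝ => if t = 0 then 0 else t ^ β) A := by
  rw [hA.cfc_eq]
  unfold mpow Matrix.IsHermitian.cfc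
  rw [dif_pos hA]
  congr 1

lemma mpow_eq_rpow (hA : A.PosSemidef) {β : ℝ} (hβ : β ≠ 0) :
    mpow A β = cfc (fun t : ℝ => t ^ β) A := by
  rw [mpow_eq_cfc hA.1]
  refine cfc_congr fun t ht => ?_
  rcases eq_or_ne t 0 with h | h
  · simp [h, Real.zero_rpow hβ]
  · simp [h]

lemma psd_sum {N : ℕ} (f : Fin N → Matrix (Fin d) (Fin d) ℂ) (s : Finset (Fin N))
    (h : ∀ i ∈ s, (f i).PosSemidef) : (∑ i ∈ s, f i).PosSemidef :=
  Finset.sum_induction f _ (fun _ _ ha hb => ha.add hb) Matrix.PosSemidef.zero h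

lemma psd_trace_re_nonneg {K : Matrix (Fin d) (Fin d) ℂ} (hK : K.PosSemidef) :
    0 ≤ (K.trace).re := by
  obtain ⟨lam, hlam, hrep⟩ := exists_rep_tr hK.1
  have h := hrep id
  rw [cfc_id ℝ K (herm_selfadj hK.1)] at h
  rw [h, Complex.ofReal_re]
  exact Finset.sum_nonneg fun i _ => spec_nonneg hK _ (hlam i)

lemma trace_mul_psd_nonneg {E M : Matrix (Fin d) (Fin d) ℂ} (hE : E.PosSemidef)
    (hM : M.PosSemidef) : 0 ≤ ((E * M).trace).re := by
  obtain ⟨C, hC⟩ : ∃ C : Matrix (Fin d) (Fin d) ℂ, M = Cᴴ * C := by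
    refine ⟨cfc Real.sqrt M, ?_⟩
    rw [(selfadj_herm (cfc_predicate Real.sqrt M)).eq, ← cfc_mul _ _ M (contOn _ _) (contOn _ _)]
    conv_lhs => rw [← cfc_id ℝ M (herm_selfadj hM.1)]
    exact cfc_congr fun t ht => (Real.mul_self_sqrt (spec_nonneg hM t ht)).symm
  subst hC
  have h1 : (E * (Cᴴ * C)).trace = (C * E * Cᴴ).trace := by
    rw [← Matrix.mul_assoc, Matrix.trace_mul_cycle]
  rw [h1]
  exact psd_trace_re_nonneg (hE.mul_mul_conjTranspose_same C)

lemma coe_smul_matrix (c : ℝ) (X : Matrix (Fin d) (Fin d) ℂ) :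
    ((c : ℂ) • X) = c • X := by
  ext i j
  simp [Complex.real_smul]


end LHAux

/-- For density matrices `σ 1, …, σ N`, a POVM `{E x}` and `α > 1`, the average success
probability is bounded by `2 ^ (((α−1)/α)·(−log₂ N + χ_α))`, where `χ_α` is the `α`-Holevo
quantity of the uniform ensemble of the `σ x`. -/
theorem avg_success_le_two_rpow_chiAlpha
    (d N : ℕ) (hN : 0 < N) (σ : Fin N → Matrix (Fin d) (Fin d) ℂ)
    (hσ_psd : ∀ x, (σ x).PosSemidef) (hσ_tr : ∀ x, (σ x).trace = 1)
    (E : Fin N → Matrix (Fin d) (Fin d) ℂ)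
    (hE_psd : ∀ x, (E x).PosSemidef) (hE_sum : ∑ x, E x = 1)
    (α : ℝ) (hα : 1 < α) :
    (1 / N : ℝ) * ∑ x, ((E x * σ x).trace).re ≤
      (2 : ℝ) ^ (((α - 1) / α) * (-(Real.logb 2 N) + chiAlpha α (fun _ => 1 / N) σ)) := by
  classical
  have hα0 : (0:ℝ) < α := by linarith
  have hαne : α ≠ 0 := ne_of_gt hα0
  have hα1ne : α - 1 ≠ 0 := by intro h; apply absurd hα; linarith [sub_eq_zero.1 h]
  have hp0 : (0:ℝ) < 1 / α := by positivity
  have hp1 : (1:ℝ) / α < 1 := by rw [div_lt_one hα0]; exact hα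
  have hpne : (1:ℝ) / α ≠ 0 := ne_of_gt hp0
  have hNR : (0:ℝ) < (N:ℝ) := by exact_mod_cast hN
  haveI : Nonempty (Fin N) := ⟨⟨0, hN⟩⟩
  set Ax : Fin N → Matrix (Fin d) (Fin d) ℂ := fun x => cfc (fun t : ℝ => t ^ α) (σ x)
    with hAxdef
  have hAx_psd : ∀ x, (Ax x).PosSemidef := fun x =>
    cfc_posSemidef (hσ_psd x).1 fun t ht => Real.rpow_nonneg (spec_nonneg (hσ_psd x) t ht) α
  have hmpowAx : ∀ x, mpow (σ x) α = Ax x := fun x => mpow_eq_rpow (hσ_psd x) hαne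
  set M : Matrix (Fin d) (Fin d) ℂ := ∑ x, Ax x with hMdef
  have hM_psd : M.PosSemidef := psd_sum Ax Finset.univ fun i _ => hAx_psd i
  set S : Matrix (Fin d) (Fin d) ℂ := cfc (fun t : ℝ => t ^ (1/α)) M with hSdef
  have hS_psd : S.PosSemidef :=
    cfc_posSemidef hM_psd.1 fun t ht => Real.rpow_nonneg (spec_nonneg hM_psd t ht) _
  -- composition
  have hcomp : ∀ x, cfc (fun t : ℝ => t ^ (1/α)) (Ax x) = σ x := by
    intro x
    rw [hAxdef]
    rw [← cfc_comp (fun t : ℝ => t ^ (1/α)) (fun t : ℝ => t ^ α) (σ x)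
      (herm_selfadj (hσ_psd x).1) (contOn' _ _ _) (contOn _ _)]
    have h : cfc ((fun t : ℝ => t ^ (1/α)) ∘ (fun t : ℝ => t ^ α)) (σ x)
        = cfc (id : ℝ → ℝ) (σ x) := by
      refine cfc_congr fun t ht => ?_
      have h0 : 0 ≤ t := spec_nonneg (hσ_psd x) t ht
      have : (t ^ α) ^ (1/α) = t ^ (α * (1/α)) := (Real.rpow_mul h0 α (1/α)).symm
      simp only [Function.comp_apply, id_eq, this]
      rw [mul_one_div, div_self hαne, Real.rpow_one]
    rw [h, cfc_id ℝ (σ x) (herm_selfadj (hσ_psd x).1)]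
  -- Löwner–Heinz
  have hSx : ∀ x, (S - σ x).PosSemidef := by
    intro x
    have hMA : (M - Ax x).PosSemidef := by
      have heq : M - Ax x = ∑ y ∈ Finset.univ.erase x, Ax y := by
        rw [hMdef, ← Finset.sum_erase_add _ _ (Finset.mem_univ x)]
        abel
      rw [heq]
      exact psd_sum Ax _ fun i _ => hAx_psd i
    have h := lh_psd (hAx_psd x) hM_psd hMA hp0 hp1
    rwa [hcomp x] at h
  -- trace comparison
  have tr_le : ∀ x, ((E x * σ x).trace).re ≤ ((E x * S).trace).re := by
    intro x
    have h := trace_mul_psd_nonneg (hE_psd x) (hSx x)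
    have hsp : (E x * S).trace = (E x * σ x).trace + (E x * (S - σ x)).trace := by
      rw [← Matrix.trace_add, ← Matrix.mul_add]
      congr 2
      abel
    rw [hsp, Complex.add_re]
    linarith
  have sum_le : ∑ x, ((E x * σ x).trace).re ≤ (S.trace).re := by
    have h1 : ∑ x, ((E x * σ x).trace).re ≤ ∑ x, ((E x * S).trace).re :=
      Finset.sum_le_sum fun x _ => tr_le x
    have h2 : ∑ x, (E x * S) = S := by rw [← Finset.sum_mul, hE_sum, one_mul]
    have h3 : ∑ x, ((E x * S).trace).re = (S.trace).re := by
      rw [← Complex.re_sum, ← Matrix.trace_sum, h2]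
    linarith
  -- positivity of traces
  have htrAx : ∀ x, 0 < ((Ax x).trace).re := by
    intro x
    obtain ⟨lam, hlam, hrep⟩ := exists_rep_tr (hσ_psd x).1
    have hid := hrep id
    rw [cfc_id ℝ (σ x) (herm_selfadj (hσ_psd x).1), hσ_tr x] at hid
    have hsum1 : (∑ i, lam i) = 1 := by
      have := hid.symm
      exact_mod_cast this
    have hlam0 : ∀ i, 0 ≤ lam i := fun i => spec_nonneg (hσ_psd x) _ (hlam i)
    obtain ⟨i0, hi0⟩ : ∃ i, 0 < lam i := by
      by_contra hcon
      push_neg at hcon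
      have : (∑ i, lam i) ≤ 0 := Finset.sum_nonpos fun i _ => hcon i
      linarith
    have hAxtr := hrep (fun t : ℝ => t ^ α)
    rw [hAxdef] at *
    rw [hAxtr, Complex.ofReal_re]
    have hterm : 0 < lam i0 ^ α := Real.rpow_pos_of_pos hi0 α
    have : lam i0 ^ α ≤ ∑ i, lam i ^ α :=
      Finset.single_le_sum (fun i _ => Real.rpow_nonneg (hlam0 i) α) (Finset.mem_univ i0)
    linarith
  obtain ⟨lam, hlamM, hrepM⟩ := exists_rep_tr hM_psd.1
  have hMtr : M.trace = ((∑ i, lam i : ℝ) : ℂ) := by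
    have hid := hrepM id
    rwa [cfc_id ℝ M (herm_selfadj hM_psd.1)] at hid
  have hMtr_pos : 0 < (M.trace).re := by
    have : (M.trace).re = ∑ x, ((Ax x).trace).re := by
      rw [hMdef, Matrix.trace_sum, Complex.re_sum]
    rw [this]
    exact Finset.sum_pos (fun x _ => htrAx x) Finset.univ_nonempty
  have hlamM0 : ∀ i, 0 ≤ lam i := fun i => spec_nonneg hM_psd _ (hlamM i)
  obtain ⟨i0, hi0⟩ : ∃ i, 0 < lam i := by
    by_contra hcon
    push_neg at hcon
    have h1 : (∑ i, lam i) ≤ 0 := Finset.sum_nonpos fun i _ => hcon i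
    rw [hMtr, Complex.ofReal_re] at hMtr_pos
    linarith
  have hStr : (S.trace).re = ∑ i, lam i ^ (1/α) := by
    rw [hSdef, hrepM (fun t : ℝ => t ^ (1/α)), Complex.ofReal_re]
  have htrS : 0 < (S.trace).re := by
    rw [hStr]
    have hterm : 0 < lam i0 ^ (1/α) := Real.rpow_pos_of_pos hi0 _
    have : lam i0 ^ (1/α) ≤ ∑ i, lam i ^ (1/α) :=
      Finset.single_le_sum (fun i _ => Real.rpow_nonneg (hlamM0 i) _) (Finset.mem_univ i0)
    linarith
  set T : ℝ := (S.trace).re with hTdef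
  -- scaling: the chi matrix
  set c : ℝ := (N:ℝ)⁻¹ with hcdef
  have hc : 0 < c := by positivity
  have hscal : (∑ x, (((1:ℝ) / (N:ℝ) : ℝ) : ℂ) • mpow (σ x) α) = c • M := by
    rw [hMdef, Finset.smul_sum]
    refine Finset.sum_congr rfl fun x _ => ?_
    rw [hmpowAx x, coe_smul_matrix, one_div]
  have hcM_psd : (c • M).PosSemidef := psd_smul hM_psd hc.le
  have hmpow_scaled : mpow (c • M) (1/α) = (c ^ (1/α) : ℝ) • S := by
    rw [mpow_eq_rpow hcM_psd hpne]
    rw [← cfc_comp_smul c (fun t : ℝ => t ^ (1/α)) M (contOn' _ _ _)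
      (herm_selfadj hM_psd.1)]
    have h : cfc (fun t : ℝ => (c • t) ^ (1/α)) M
        = cfc (fun t : ℝ => c ^ (1/α) * t ^ (1/α)) M := by
      refine cfc_congr fun t ht => ?_
      have h0 : 0 ≤ t := spec_nonneg hM_psd t ht
      rw [smul_eq_mul, Real.mul_rpow hc.le h0]
    rw [h]
    have h2 := cfc_smul (R := ℝ) (c ^ (1/α)) (fun t : ℝ => t ^ (1/α)) M (contOn _ _)
    simp only [smul_eq_mul] at h2
    rw [h2, hSdef]
  have htr_chi : ((mpow (∑ x, (((1:ℝ) / (N:ℝ) : ℝ) : ℂ) • mpow (σ x) α) (1/α)).trace).re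
      = c ^ (1/α) * T := by
    rw [hscal, hmpow_scaled, Matrix.trace_smul, Complex.smul_re, smul_eq_mul, hTdef]
  -- chi value
  have hchi : chiAlpha α (fun _ => 1 / (N:ℝ)) σ
      = (α / (α - 1)) * Real.logb 2 (c ^ (1/α) * T) := by
    unfold chiAlpha
    rw [show (fun (_ : Fin N) => 1 / (N:ℝ)) = fun _ => ((1:ℝ) / (N:ℝ) : ℝ) from rfl]
    rw [htr_chi]
  -- exponent algebra
  have hTne : T ≠ 0 := ne_of_gt htrS
  have hcpow_pos : 0 < c ^ (1/α) := Real.rpow_pos_of_pos hc _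
  have hlogmul : Real.logb 2 (c ^ (1/α) * T)
      = (1/α) * Real.logb 2 c + Real.logb 2 T := by
    rw [Real.logb_mul (ne_of_gt hcpow_pos) hTne]
    congr 1
    rw [Real.logb, Real.logb, Real.log_rpow hc]
    ring
  have hlogc : Real.logb 2 c = - Real.logb 2 (N:ℝ) := by
    rw [hcdef, Real.logb_inv]
  have hexp : ((α - 1) / α) * (-(Real.logb 2 (N:ℝ)) + chiAlpha α (fun _ => 1 / (N:ℝ)) σ)
      = Real.logb 2 (T / (N:ℝ)) := by
    rw [hchi, hlogmul, hlogc, Real.logb_div hTne (ne_of_gt hNR)]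
    field_simp
    ring
  rw [hexp, Real.rpow_logb (by norm_num) (by norm_num) (by positivity)]
  have : (1 / (N:ℝ)) * ∑ x, ((E x * σ x).trace).re ≤ (1 / (N:ℝ)) * T := by
    apply mul_le_mul_of_nonneg_left sum_le (by positivity)
  calc (1 / (N:ℝ)) * ∑ x, ((E x * σ x).trace).re ≤ (1 / (N:ℝ)) * T := this
    _ = T / (N:ℝ) := by ring
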